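/- Suppose each f_i is convex and L_i-smooth and x* is a global minimizer of F (so ∇F(x*) = 0). Then for all x, w ∈ ℝ^d, (L̄/n)∑_{i=1}^n (1/L_i)‖∇f_i(x) − ∇f_i(w)‖² ≤ 4L̄(F(x) − F(x*)) + 2L̄·D(w), where D(w) = (1/n)∑_{i=1}^n (1/L_i)‖∇f_i(w) − ∇f_i(x*)‖². -/

import Mathlib

open MeasureTheory Finset
open scoped RealInnerProductSpace BigOperators

abbrev Euc (d : ℕ) := EuclideanSpace ℝ (Fin d)

/-- The finite-sum objective `F(x) = (1/n) ∑ f i x`. -/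
noncomputable def avgF {d : ℕ} (n : ℕ) (f : Fin n → Euc d → ℝ) (x : Euc d) : ℝ :=
  (1 / (n : ℝ)) * ∑ i, f i x

/-- The gradient of the finite-sum objective, `∇F(x) = (1/n) ∑ ∇f i x`. -/
noncomputable def avgG {d : ℕ} (n : ℕ) (f' : Fin n → Euc d → Euc d) (x : Euc d) : Euc d :=
  (1 / (n : ℝ)) • ∑ i, f' i x

/-- The effective sampling variance `V_e(q; x, w)`. -/
noncomputable def Ve {d : ℕ} (n : ℕ) (f' : Fin n → Euc d → Euc d)
    (q : Fin n → ℝ) (x w : Euc d) : ℝ :=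
  (1 / (n : ℝ) ^ 2) * ∑ i, (1 / q i) * ‖f' i x - f' i w‖ ^ 2

/-- The average smoothness constant `L̄ = (1/n) ∑ L i`. -/
noncomputable def Lbar (n : ℕ) (L : Fin n → ℝ) : ℝ := (1 / (n : ℝ)) * ∑ i, L i

/-- The importance sampling distribution `p^IS_i = L i / (n L̄)`. -/
noncomputable def pIS (n : ℕ) (L : Fin n → ℝ) (i : Fin n) : ℝ :=
  L i / ((n : ℝ) * Lbar n L)

/-- `D(w) = (1/n) ∑ (1 / L i) ‖∇f i w - ∇f i x*‖²`. -/
noncomputable def Dfun {d : ℕ} (n : ℕ) (f' : Fin n → Euc d → Euc d) (L : Fin n → ℝ)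
    (xstar w : Euc d) : ℝ :=
  (1 / (n : ℝ)) * ∑ i, (1 / L i) * ‖f' i w - f' i xstar‖ ^ 2

-- descent lemma
lemma descent {d : ℕ} {Lc : ℝ} (f : Euc d → ℝ) (f' : Euc d → Euc d)
    (hg : ∀ x, HasGradientAt f (f' x) x) (hL : 0 < Lc)
    (hs : ∀ x y, ‖f' x - f' y‖ ≤ Lc * ‖x - y‖) (x y : Euc d) :
    f y ≤ f x + ⟪f' x, y - x⟫ + Lc / 2 * ‖y - x‖ ^ 2 := by
  set c : Euc d := y - x with hc
  set h : ℝ → ℝ := fun t => f (x + t • c) - t * ⟪f' x, c⟫ - Lc / 2 * t ^ 2 * ‖c‖ ^ 2 with hh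
  have hderiv : ∀ t : ℝ, HasDerivAt h
      (⟪f' (x + t • c), c⟫ - ⟪f' x, c⟫ - Lc / 2 * (2 * t) * ‖c‖ ^ 2) t := by
    intro t
    have h1 : HasDerivAt (fun t : ℝ => x + t • c) c t := by
      simpa using ((hasDerivAt_id t).smul_const c).const_add x
    have h2 : HasDerivAt (fun t : ℝ => f (x + t • c)) ⟪f' (x + t • c), c⟫ t := by
      have := (hg (x + t • c)).hasFDerivAt.comp_hasDerivAt t h1
      simpa [InnerProductSpace.toDual_apply_apply, Function.comp_def] using this
    have h3 : HasDerivAt (fun t : ℝ => t * ⟪f' x, c⟫) ⟪f' x, c⟫ t := by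
      simpa using (hasDerivAt_id t).mul_const (⟪f' x, c⟫ : ℝ)
    have h4 : HasDerivAt (fun t : ℝ => Lc / 2 * t ^ 2 * ‖c‖ ^ 2)
        (Lc / 2 * (2 * t) * ‖c‖ ^ 2) t := by
      have := (hasDerivAt_pow 2 t).const_mul (Lc / 2)
      simpa [mul_comm, mul_assoc, mul_left_comm] using this.mul_const (‖c‖ ^ 2)
    exact (h2.sub h3).sub h4
  have hanti : AntitoneOn h (Set.Icc (0:ℝ) 1) := by
    apply antitoneOn_of_deriv_nonpos (convex_Icc 0 1)
    · exact fun t _ => (hderiv t).differentiableAt.continuousAt.continuousWithinAt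
    · exact fun t _ => (hderiv t).differentiableAt.differentiableWithinAt
    · intro t ht
      rw [interior_Icc] at ht
      rw [(hderiv t).deriv]
      have h5 : ⟪f' (x + t • c) - f' x, c⟫ ≤ ‖f' (x + t • c) - f' x‖ * ‖c‖ :=
        real_inner_le_norm _ _
      have h6 : ‖f' (x + t • c) - f' x‖ ≤ Lc * (t * ‖c‖) := by
        have := hs (x + t • c) x
        simpa [norm_smul, abs_of_pos ht.1] using this
      have h7 : ⟪f' (x + t • c), c⟫ - ⟪f' x, c⟫ = ⟪f' (x + t • c) - f' x, c⟫ := by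
        rw [inner_sub_left]
      nlinarith [norm_nonneg c, norm_nonneg (f' (x + t • c) - f' x), ht.1.le]
  have := hanti (Set.left_mem_Icc.2 zero_le_one) (Set.right_mem_Icc.2 zero_le_one) zero_le_one
  have hy : x + (1:ℝ) • c = y := by simp [hc]
  have e1 : h 1 = f y - ⟪f' x, c⟫ - Lc / 2 * ‖c‖ ^ 2 := by
    simp only [hh]; rw [hy]; ring
  have e0 : h 0 = f x := by simp [hh]
  rw [e1, e0] at this
  linarith

-- cocoercivity
lemma cocoercive {d : ℕ} {Lc : ℝ} (f : Euc d → ℝ) (f' : Euc d → Euc d)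
    (hg : ∀ x, HasGradientAt f (f' x) x) (hL : 0 < Lc)
    (hconv : ∀ x y, f x + ⟪f' x, y - x⟫ ≤ f y)
    (hs : ∀ x y, ‖f' x - f' y‖ ≤ Lc * ‖x - y‖) (x y : Euc d) :
    ‖f' x - f' y‖ ^ 2 ≤ 2 * Lc * (f x - f y - ⟪f' y, x - y⟫) := by
  set g : Euc d := f' x - f' y with hgdef
  set z : Euc d := x - (1 / Lc) • g with hz
  have h1 : f y + ⟪f' y, z - y⟫ ≤ f z := hconv y z
  have h2 : f z ≤ f x + ⟪f' x, z - x⟫ + Lc / 2 * ‖z - x‖ ^ 2 := descent f f' hg hL hs x z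
  have hzx : z - x = -((1 / Lc) • g) := by rw [hz]; abel
  have h3 : ⟪f' x, z - x⟫ = -(1 / Lc) * ⟪f' x, g⟫ := by
    rw [hzx, inner_neg_right, real_inner_smul_right]; ring
  have h4 : ‖z - x‖ ^ 2 = (1 / Lc) ^ 2 * ‖g‖ ^ 2 := by
    rw [hzx, norm_neg, norm_smul]
    rw [Real.norm_eq_abs, abs_of_pos (by positivity : (0:ℝ) < 1 / Lc)]
    ring
  have h5 : ⟪f' y, z - y⟫ = ⟪f' y, x - y⟫ - (1 / Lc) * ⟪f' y, g⟫ := by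
    have : z - y = (x - y) - (1 / Lc) • g := by rw [hz]; abel
    rw [this, inner_sub_right, real_inner_smul_right]
  have h6 : ⟪f' x, g⟫ - ⟪f' y, g⟫ = ‖g‖ ^ 2 := by
    rw [← inner_sub_left, ← hgdef, real_inner_self_eq_norm_sq]
  have hLne : Lc ≠ 0 := ne_of_gt hL
  have key : f y + ⟪f' y, x - y⟫ + (1 / (2 * Lc)) * ‖g‖ ^ 2 ≤ f x := by
    have := h1.trans h2
    rw [h3, h4, h5] at this
    have e : -(1/Lc) * ⟪f' x, g⟫ + (1/Lc) * ⟪f' y, g⟫ = -(1/Lc) * ‖g‖^2 := by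
      rw [← h6]; ring
    have hident2 : Lc/2*((1/Lc)^2*‖g‖^2) = 1/(2*Lc)*‖g‖^2 := by field_simp
    have hident3 : (1/Lc)*‖g‖^2 = 2*(1/(2*Lc)*‖g‖^2) := by field_simp
    linarith [this, e, hident2, hident3]
  have : (1 / (2 * Lc)) * ‖g‖ ^ 2 ≤ f x - f y - ⟪f' y, x - y⟫ := by linarith
  calc ‖g‖ ^ 2 = 2 * Lc * ((1 / (2 * Lc)) * ‖g‖ ^ 2) := by field_simp
    _ ≤ 2 * Lc * (f x - f y - ⟪f' y, x - y⟫) := by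
        apply mul_le_mul_of_nonneg_left this (by positivity)

/-- bound on the weighted gradient-difference average. -/
theorem weighted_gradient_diff_bound (d n : ℕ) (hd : 0 < d) (hn : 0 < n)
    (f : Fin n → Euc d → ℝ) (f' : Fin n → Euc d → Euc d) (L : Fin n → ℝ)
    (hgrad : ∀ i x, HasGradientAt (f i) (f' i x) x)
    (hconv : ∀ i x y, f i x + ⟪f' i x, y - x⟫ ≤ f i y)
    (hLpos : ∀ i, 0 < L i)
    (hsmooth : ∀ i x y, ‖f' i x - f' i y‖ ≤ L i * ‖x - y‖)
    (xstar : Euc d) (hmin : ∀ y, avgF n f xstar ≤ avgF n f y)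
    (x w : Euc d) :
    (Lbar n L / (n : ℝ)) * ∑ i, (1 / L i) * ‖f' i x - f' i w‖ ^ 2 ≤
      4 * Lbar n L * (avgF n f x - avgF n f xstar) +
      2 * Lbar n L * Dfun n f' L xstar w := by
  have hn' : (0:ℝ) < n := Nat.cast_pos.2 hn
  have hnne : (n:ℝ) ≠ 0 := ne_of_gt hn'
  have hLb : 0 < Lbar n L := by
    rw [Lbar]
    have : (0:ℝ) < ∑ i, L i :=
      Finset.sum_pos (fun i _ => hLpos i) (Finset.univ_nonempty_iff.2 ⟨⟨0, hn⟩⟩)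
    positivity
  -- gradient of avgF is zero at xstar
  have hFgrad : HasFDerivAt (avgF n f)
      (InnerProductSpace.toDual ℝ (Euc d) (avgG n f' xstar)) xstar := by
    have hsum : HasFDerivAt (fun y => ∑ i, f i y)
        (∑ i, InnerProductSpace.toDual ℝ (Euc d) (f' i xstar)) xstar :=
      HasFDerivAt.fun_sum (fun i _ => (hgrad i xstar).hasFDerivAt)
    have := hsum.const_mul (1 / (n:ℝ))
    have heq : InnerProductSpace.toDual ℝ (Euc d) (avgG n f' xstar)
        = (1 / (n:ℝ)) • ∑ i, InnerProductSpace.toDual ℝ (Euc d) (f' i xstar) := by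
      rw [avgG]; simp only [_root_.map_smul, map_sum]
    rw [heq]
    exact this
  have hlocmin : IsLocalMin (avgF n f) xstar := Filter.Eventually.of_forall hmin
  have hG0 : avgG n f' xstar = 0 := by
    have h0 := hlocmin.hasFDerivAt_eq_zero hFgrad
    apply (InnerProductSpace.toDual ℝ (Euc d)).injective
    rw [h0, map_zero]
  have hsumzero : ∑ i, f' i xstar = 0 := by
    rw [avgG, smul_eq_zero] at hG0
    rcases hG0 with h | h
    · exact absurd h (by simpa using hnne)
    · exact h
  have hinner : ∑ i, ⟪f' i xstar, x - xstar⟫ = 0 := by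
    rw [← sum_inner, hsumzero, inner_zero_left]
  -- cocoercivity bound on S1
  have hS1 : ∑ i, (1 / L i) * ‖f' i x - f' i xstar‖ ^ 2
      ≤ 2 * (∑ i, f i x) - 2 * (∑ i, f i xstar) := by
    have step : ∑ i, (1 / L i) * ‖f' i x - f' i xstar‖ ^ 2
        ≤ ∑ i, 2 * (f i x - f i xstar - ⟪f' i xstar, x - xstar⟫) := by
      apply Finset.sum_le_sum
      intro i _
      have hc := cocoercive (f i) (f' i) (hgrad i) (hLpos i) (hconv i) (hsmooth i) x xstar
      have hLi := hLpos i
      have := mul_le_mul_of_nonneg_left hc (le_of_lt (by positivity : (0:ℝ) < 1 / L i))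
      calc (1 / L i) * ‖f' i x - f' i xstar‖ ^ 2
          ≤ (1 / L i) * (2 * L i * (f i x - f i xstar - ⟪f' i xstar, x - xstar⟫)) := this
        _ = 2 * (f i x - f i xstar - ⟪f' i xstar, x - xstar⟫) := by field_simp
    have expand : ∑ i, 2 * (f i x - f i xstar - ⟪f' i xstar, x - xstar⟫)
        = 2 * (∑ i, f i x) - 2 * (∑ i, f i xstar)
          - 2 * (∑ i, ⟪f' i xstar, x - xstar⟫) := by
      simp [mul_sub, Finset.sum_sub_distrib, Finset.mul_sum]
    rw [expand, hinner] at step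
    linarith
  -- triangle bound on S0
  have hS0 : ∑ i, (1 / L i) * ‖f' i x - f' i w‖ ^ 2
      ≤ 2 * ∑ i, (1 / L i) * ‖f' i x - f' i xstar‖ ^ 2
        + 2 * ∑ i, (1 / L i) * ‖f' i w - f' i xstar‖ ^ 2 := by
    have hstep : ∑ i, (1 / L i) * ‖f' i x - f' i w‖ ^ 2
        ≤ ∑ i, (2 * ((1 / L i) * ‖f' i x - f' i xstar‖ ^ 2)
            + 2 * ((1 / L i) * ‖f' i w - f' i xstar‖ ^ 2)) := by
      apply Finset.sum_le_sum
      intro i _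
      have htri : ‖f' i x - f' i w‖ ≤ ‖f' i x - f' i xstar‖ + ‖f' i w - f' i xstar‖ := by
        have : f' i x - f' i w = (f' i x - f' i xstar) - (f' i w - f' i xstar) := by abel
        rw [this]
        exact norm_sub_le _ _
      have hsq : ‖f' i x - f' i w‖ ^ 2 ≤ 2 * ‖f' i x - f' i xstar‖ ^ 2
          + 2 * ‖f' i w - f' i xstar‖ ^ 2 := by
        nlinarith [sq_nonneg (‖f' i x - f' i xstar‖ - ‖f' i w - f' i xstar‖),
          norm_nonneg (f' i x - f' i w), norm_nonneg (f' i x - f' i xstar),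
          norm_nonneg (f' i w - f' i xstar)]
      have hLi : (0:ℝ) < 1 / L i := by have := hLpos i; positivity
      calc (1 / L i) * ‖f' i x - f' i w‖ ^ 2
          ≤ (1 / L i) * (2 * ‖f' i x - f' i xstar‖ ^ 2 + 2 * ‖f' i w - f' i xstar‖ ^ 2) :=
            mul_le_mul_of_nonneg_left hsq hLi.le
          _ = 2 * ((1 / L i) * ‖f' i x - f' i xstar‖ ^ 2)
              + 2 * ((1 / L i) * ‖f' i w - f' i xstar‖ ^ 2) := by ring
    rw [Finset.sum_add_distrib, ← Finset.mul_sum, ← Finset.mul_sum] at hstep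
    exact hstep
  -- put it together
  set S0 := ∑ i, (1 / L i) * ‖f' i x - f' i w‖ ^ 2 with hS0def
  set S1 := ∑ i, (1 / L i) * ‖f' i x - f' i xstar‖ ^ 2 with hS1def
  set S2 := ∑ i, (1 / L i) * ‖f' i w - f' i xstar‖ ^ 2 with hS2def
  have hFx : ∑ i, f i x = (n:ℝ) * avgF n f x := by rw [avgF]; field_simp
  have hFxs : ∑ i, f i xstar = (n:ℝ) * avgF n f xstar := by rw [avgF]; field_simp
  have hS1' : S1 ≤ 2 * (n:ℝ) * avgF n f x - 2 * (n:ℝ) * avgF n f xstar := by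
    rw [hFx, hFxs] at hS1; linarith
  have hcoef : (0:ℝ) ≤ Lbar n L / n := by positivity
  have c1 : Lbar n L / n * S0 ≤ Lbar n L / n * (2 * S1 + 2 * S2) :=
    mul_le_mul_of_nonneg_left hS0 hcoef
  have c2 : Lbar n L / n * (2 * S1 + 2 * S2)
      ≤ Lbar n L / n * (4 * (n:ℝ) * (avgF n f x - avgF n f xstar) + 2 * S2) :=
    mul_le_mul_of_nonneg_left (by linarith) hcoef
  have c3 : Lbar n L / n * (4 * (n:ℝ) * (avgF n f x - avgF n f xstar) + 2 * S2)
      = 4 * Lbar n L * (avgF n f x - avgF n f xstar)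
        + 2 * Lbar n L * ((1 / (n:ℝ)) * S2) := by
    field_simp
  have hD : Dfun n f' L xstar w = (1 / (n:ℝ)) * S2 := by rw [Dfun]
  rw [hD]
  calc Lbar n L / n * S0 ≤ _ := c1
    _ ≤ _ := c2
    _ = _ := c3
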